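/- Let B⁺, B⁻, T⁺, T⁻ : ℤ → ℕ be finitely supported and satisfy the edge-count relation (⋆). If B⁺(p) = 0 and B⁻(p) = 0 for all integers p, then T⁺(p) = T⁻(p) for all integers p. -/

import Mathlib

/-- Corollary: with no branch points, positive and negative triple point
counts agree at each Alexander index. -/
theorem no_branch_points_triple_points_balance
    (Bp Bm Tp Tm : ℤ → ℕ)
    (hBp : (Function.support Bp).Finite) (hBm : (Function.support Bm).Finite)
    (hTp : (Function.support Tp).Finite) (hTm : (Function.support Tm).Finite)
    (hstar : ∀ p : ℤ, ((Bp p : ℤ) - (Bm p : ℤ)) =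
      (((Tp (p + 1) : ℤ) - (Tm (p + 1) : ℤ)) - ((Tp p : ℤ) - (Tm p : ℤ))))
    (hB : ∀ p : ℤ, Bp p = 0 ∧ Bm p = 0) :
    ∀ p : ℤ, Tp p = Tm p := by
  set f : ℤ → ℤ := fun p => (Tp p : ℤ) - (Tm p : ℤ) with hf
  have hstep : ∀ p : ℤ, f (p + 1) = f p := by
    intro p
    have h := hstar p
    rw [(hB p).1, (hB p).2] at h
    simp only [Nat.cast_zero, sub_zero, sub_self] at h
    have : f (p + 1) - f p = 0 := by simpa [hf] using h.symm
    linarith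
  have hconst : ∀ p : ℤ, f p = f 0 := by
    intro p
    induction p using Int.induction_on with
    | zero => rfl
    | succ n ih => rw [hstep, ih]
    | pred n ih => rw [← ih, ← hstep (-n - 1)]; ring_nf
  -- find a point outside all supports
  have hfin : (Function.support Tp ∪ Function.support Tm).Finite := hTp.union hTm
  obtain ⟨q, hq⟩ := Set.Infinite.nonempty (Set.Finite.infinite_compl hfin)
  simp only [Set.mem_compl_iff, Set.mem_union, Function.mem_support, not_or, not_not] at hq
  have hq0 : f q = 0 := by simp [hf, hq.1, hq.2]
  intro p
  have : f p = 0 := by rw [hconst p, ← hconst q, hq0]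
  have := this
  simp only [hf, sub_eq_zero] at this
  exact_mod_cast this
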